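/- For every n ≥ 2, the Bayesian order ⊑ on Δⁿ is a partial order in which every directed subset has a supremum (a dcpo); its set of maximal elements is exactly {e₁,…,eₙ}, and its least element is ⊥ = (1/n,…,1/n). -/

import Mathlib

/-- Δⁿ : classical n-states. -/
def IsClassicalState (n : ℕ) (x : Fin n → ℝ) : Prop :=
  (∀ i, 0 ≤ x i) ∧ ∑ i, x i = 1

def ClState (n : ℕ) := {x : Fin n → ℝ // IsClassicalState n x}

/-- The Bayesian order (symmetric characterization). -/
def bayesLE {n : ℕ} (x y : Fin n → ℝ) : Prop :=
  ∃ σ : Equiv.Perm (Fin n),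
    Antitone (fun i => x (σ i)) ∧ Antitone (fun i => y (σ i)) ∧
    ∀ i j : Fin n, (i : ℕ) + 1 = (j : ℕ) →
      x (σ i) * y (σ j) ≤ x (σ j) * y (σ i)

def clLE {n : ℕ} (x y : ClState n) : Prop := bayesLE x.val y.val

/-- `a` is the supremum (least upper bound) of `S` with respect to `le`. -/
def IsLub' {α : Type*} (le : α → α → Prop) (S : Set α) (a : α) : Prop :=
  (∀ s ∈ S, le s a) ∧ ∀ b, (∀ s ∈ S, le s b) → le a b

/-- The pure state eᵢ. -/
def pureState {n : ℕ} (i : Fin n) : Fin n → ℝ := fun j => if j = i then 1 else 0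


variable {n : ℕ}

/-- Pairwise characterization of the Bayesian order. -/
def pairLE {n : ℕ} (x y : Fin n → ℝ) : Prop :=
  ∀ a b : Fin n,
    (x b ≤ x a ∧ y b ≤ y a ∧ x a * y b ≤ x b * y a) ∨
    (x a ≤ x b ∧ y a ≤ y b ∧ x b * y a ≤ x a * y b)

theorem bayesLE_of_pairLE {x y : Fin n → ℝ} (hx : ∀ i, 0 ≤ x i) (h : pairLE x y) :
    bayesLE x y := by
  classical
  set f : Fin n → ℝ ×ₗ ℝ := fun a => toLex (-x a, -y a) with hf
  set σ := Tuple.sort f with hσ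
  have hmono : Monotone (f ∘ σ) := Tuple.monotone_sort f
  have key : ∀ i j : Fin n, i ≤ j →
      x (σ j) ≤ x (σ i) ∧ (x (σ i) = x (σ j) → y (σ j) ≤ y (σ i)) := by
    intro i j hij
    have h2 := hmono hij
    simp only [Function.comp, hf, Prod.Lex.le_iff, ofLex_toLex] at h2
    rcases h2 with h2 | ⟨h2, h3⟩
    · exact ⟨by linarith, fun he => by linarith⟩
    · exact ⟨by linarith, fun _ => by linarith⟩
  have hxa : Antitone fun i => x (σ i) := fun i j hij => (key i j hij).1
  have hya : Antitone fun i => y (σ i) := by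
    intro i j hij
    rcases lt_or_eq_of_le (key i j hij).1 with hlt | heq
    · rcases h (σ i) (σ j) with ⟨_, h2, _⟩ | ⟨h1, _, _⟩
      · exact h2
      · exact absurd h1 (not_le.mpr hlt)
    · exact (key i j hij).2 heq.symm
  refine ⟨σ, hxa, hya, ?_⟩
  intro i j hij
  have hij' : i ≤ j := by
    rw [Fin.le_def]; omega
  rcases lt_or_eq_of_le (key i j hij').1 with hlt | heq
  · rcases h (σ i) (σ j) with ⟨_, _, h3⟩ | ⟨h1, _, _⟩
    · exact h3
    · exact absurd h1 (not_le.mpr hlt)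
  · rw [heq.symm]
    exact mul_le_mul_of_nonneg_left ((key i j hij').2 heq.symm) (hx _)

theorem pairLE_of_bayesLE {x y : Fin n → ℝ} (hx : ∀ i, 0 ≤ x i) (hy : ∀ i, 0 ≤ y i)
    (h : bayesLE x y) : pairLE x y := by
  obtain ⟨σ, hxa, hya, hc⟩ := h
  have chain : ∀ k : ℕ, ∀ hk : k < n, ∀ i : Fin n, (i : ℕ) ≤ k →
      x (σ i) * y (σ ⟨k, hk⟩) ≤ x (σ ⟨k, hk⟩) * y (σ i) := by
    intro k
    induction k with
    | zero =>
      intro hk i hi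
      have : i = ⟨0, hk⟩ := Fin.ext (Nat.le_zero.mp hi)
      rw [this, mul_comm]
    | succ k ih =>
      intro hk i hi
      rcases Nat.eq_or_lt_of_le hi with he | hlt
      · have : i = ⟨k + 1, hk⟩ := Fin.ext he
        rw [this, mul_comm]
      · have hk' : k < n := by omega
        have IH := ih hk' i (by omega)
        have hstep := hc ⟨k, hk'⟩ ⟨k + 1, hk⟩ rfl
        have hle : (⟨k, hk'⟩ : Fin n) ≤ ⟨k + 1, hk⟩ := by simp [Fin.le_def]
        set A := x (σ i) with hA
        set B := y (σ i) with hB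
        set ak := x (σ ⟨k, hk'⟩) with hak
        set bk := y (σ ⟨k, hk'⟩) with hbk
        set ak1 := x (σ ⟨k + 1, hk⟩) with hak1'
        set bk1 := y (σ ⟨k + 1, hk⟩) with hbk1'
        have hbk1 : bk1 ≤ bk := hya hle
        have hak1 : ak1 ≤ ak := hxa hle
        have h0A : 0 ≤ A := hx _
        have h0B : 0 ≤ B := hy _
        have h0ak : 0 ≤ ak := hx _
        have h0bk : 0 ≤ bk := hy _
        have h0ak1 : 0 ≤ ak1 := hx _
        have h0bk1 : 0 ≤ bk1 := hy _
        rcases eq_or_lt_of_le h0bk with hbk0 | hbkpos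
        · have hz : bk1 = 0 := le_antisymm (by linarith) h0bk1
          rw [hz]; simpa using mul_nonneg h0ak1 h0B
        · rcases eq_or_lt_of_le h0ak with hak0 | hakpos
          · have hak10 : ak1 = 0 := le_antisymm (by linarith) h0ak1
            have IH' : A * bk ≤ 0 := by rw [← hak0, zero_mul] at IH; exact IH
            have hA0 : A = 0 := le_antisymm (by nlinarith) h0A
            rw [hA0, hak10]; simp
          · have hmul := mul_le_mul IH hstep (mul_nonneg h0ak h0bk1) (mul_nonneg h0ak h0B)
            have hpos : 0 < ak * bk := mul_pos hakpos hbkpos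
            nlinarith [hmul, hpos]
  intro a b
  have ha : σ (σ.symm a) = a := Equiv.apply_symm_apply σ a
  have hb : σ (σ.symm b) = b := Equiv.apply_symm_apply σ b
  rcases le_total (σ.symm a) (σ.symm b) with hij | hji
  · left
    refine ⟨?_, ?_, ?_⟩
    · rw [← ha, ← hb]; exact hxa hij
    · rw [← ha, ← hb]; exact hya hij
    · have := chain ((σ.symm b : Fin n) : ℕ) (σ.symm b).isLt (σ.symm a) hij
      rw [← ha, ← hb]
      simpa [Fin.eta] using this
  · right
    refine ⟨?_, ?_, ?_⟩
    · rw [← ha, ← hb]; exact hxa hji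
    · rw [← ha, ← hb]; exact hya hji
    · have := chain ((σ.symm a : Fin n) : ℕ) (σ.symm a).isLt (σ.symm b) hji
      rw [← ha, ← hb]
      simpa [Fin.eta] using this

theorem pairLE_refl (x : Fin n → ℝ) : pairLE x x := by
  intro a b
  rcases le_total (x b) (x a) with h | h
  · exact Or.inl ⟨h, h, (mul_comm (x a) (x b)).le⟩
  · exact Or.inr ⟨h, h, (mul_comm (x b) (x a)).le⟩

theorem exists_pos_coord {y : Fin n → ℝ} (hy : IsClassicalState n y) : ∃ a, 0 < y a := by
  by_contra hc
  push_neg at hc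
  have h0 : ∑ i, y i = 0 := Finset.sum_eq_zero fun i _ => le_antisymm (hc i) (hy.1 i)
  rw [hy.2] at h0
  exact one_ne_zero h0

theorem pair_zero {y z : Fin n → ℝ} (hz : ∀ i, 0 ≤ z i) (h : pairLE y z)
    {a b : Fin n} (hap : 0 < y a) (hb0 : y b = 0) : z b = 0 := by
  rcases h a b with ⟨_, _, h3⟩ | ⟨h1, _, _⟩
  · rw [hb0, zero_mul] at h3
    have h4 : z b ≤ 0 := by nlinarith [hz b]
    linarith [hz b]
  · rw [hb0] at h1
    linarith

theorem pairLE_trans {x y z : Fin n → ℝ} (hx : IsClassicalState n x) (hy : IsClassicalState n y)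
    (hz : IsClassicalState n z) (h1 : pairLE x y) (h2 : pairLE y z) : pairLE x z := by
  have zprop : ∀ b, y b = 0 → z b = 0 := fun b hb => by
    obtain ⟨a, ha⟩ := exists_pos_coord hy
    exact pair_zero hz.1 h2 ha hb
  have combo1 : ∀ a b, (x b ≤ x a ∧ y b ≤ y a ∧ x a * y b ≤ x b * y a) →
      (y b ≤ y a ∧ z b ≤ z a ∧ y a * z b ≤ y b * z a) →
      x b ≤ x a ∧ z b ≤ z a ∧ x a * z b ≤ x b * z a := by
    rintro a b ⟨hx1, hy1, hxy⟩ ⟨-, hz1, hyz⟩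
    refine ⟨hx1, hz1, ?_⟩
    rcases eq_or_lt_of_le (hy.1 b) with hyb0 | hybpos
    · have hzb : z b = 0 := zprop b hyb0.symm
      rw [hzb, mul_zero]
      exact mul_nonneg (hx.1 b) (hz.1 a)
    · have hyapos : 0 < y a := lt_of_lt_of_le hybpos hy1
      have hmul := mul_le_mul hxy hyz (mul_nonneg (hy.1 a) (hz.1 b)) (mul_nonneg (hx.1 b) (hy.1 a))
      have hpos : 0 < y a * y b := mul_pos hyapos hybpos
      nlinarith [hmul, hpos]
  have combo2 : ∀ a b, (x b ≤ x a ∧ y b ≤ y a ∧ x a * y b ≤ x b * y a) →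
      (y a ≤ y b ∧ z a ≤ z b ∧ y b * z a ≤ y a * z b) →
      (x b ≤ x a ∧ z b ≤ z a ∧ x a * z b ≤ x b * z a) ∨
      (x a ≤ x b ∧ z a ≤ z b ∧ x b * z a ≤ x a * z b) := by
    rintro a b ⟨hx1, hy1, hxy⟩ ⟨hy2, hz2, hyz⟩
    have hyeq : y a = y b := le_antisymm hy2 hy1
    rcases eq_or_lt_of_le (hy.1 a) with hya0 | hyapos
    · have hza : z a = 0 := zprop a hya0.symm
      have hzb : z b = 0 := zprop b (by rw [← hyeq, ← hya0])
      exact Or.inl ⟨hx1, by simp [hza, hzb], by simp [hza, hzb]⟩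
    · have hxab : x a = x b := by
        rw [← hyeq] at hxy
        exact le_antisymm (le_of_mul_le_mul_right hxy hyapos) hx1
      refine Or.inr ⟨le_of_eq hxab, hz2, ?_⟩
      rw [hxab]
      exact mul_le_mul_of_nonneg_left hz2 (hx.1 b)
  intro a b
  rcases h1 a b with c1 | c1 <;> rcases h2 a b with c2 | c2
  · exact Or.inl (combo1 a b c1 c2)
  · exact combo2 a b c1 c2
  · exact (combo2 b a c1 c2).symm
  · exact Or.inr (combo1 b a c1 c2)

theorem pair_antisymm {x y : Fin n → ℝ} (hx : IsClassicalState n x) (hy : IsClassicalState n y)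
    (h1 : pairLE x y) (h2 : pairLE y x) : x = y := by
  have key : ∀ a b, x a * y b = x b * y a := by
    intro a b
    rcases h1 a b with ⟨hx1, hy1, hxy⟩ | ⟨hx1, hy1, hxy⟩ <;>
      rcases h2 a b with ⟨hy2, hx2, hyx⟩ | ⟨hy2, hx2, hyx⟩
    · exact le_antisymm hxy (by nlinarith [hyx])
    · rw [le_antisymm hx2 hx1, le_antisymm hy2 hy1]
    · rw [le_antisymm hx1 hx2, le_antisymm hy1 hy2]
    · exact le_antisymm (by nlinarith [hyx]) hxy
  funext a
  calc x a = x a * ∑ i, y i := by rw [hy.2, mul_one]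
    _ = ∑ i, x a * y i := by rw [Finset.mul_sum]
    _ = ∑ i, x i * y a := Finset.sum_congr rfl fun i _ => key a i
    _ = (∑ i, x i) * y a := by rw [Finset.sum_mul]
    _ = y a := by rw [hx.2, one_mul]

theorem isClosed_antitone_perm (σ : Equiv.Perm (Fin n)) :
    IsClosed {y : Fin n → ℝ | Antitone fun i => y (σ i)} := by
  have he : {y : Fin n → ℝ | Antitone fun i => y (σ i)} =
      ⋂ (i : Fin n), ⋂ (j : Fin n), ⋂ (_ : i ≤ j), {y : Fin n → ℝ | y (σ j) ≤ y (σ i)} := by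
    ext y
    simp only [Set.mem_setOf_eq, Set.mem_iInter]
    exact ⟨fun h i j hij => h hij, fun h a b hab => h a b hab⟩
  rw [he]
  exact isClosed_iInter fun i => isClosed_iInter fun j => isClosed_iInter fun _ =>
    isClosed_le (continuous_apply _) (continuous_apply _)

theorem isClosed_const_set (A : Prop) : IsClosed {y : Fin n → ℝ | A} := by
  by_cases hA : A
  · have : {y : Fin n → ℝ | A} = Set.univ := by ext y; simp [hA]
    rw [this]; exact isClosed_univ
  · have : {y : Fin n → ℝ | A} = ∅ := by ext y; simp [hA]
    rw [this]; exact isClosed_empty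

theorem isClosed_bayes_right (x : Fin n → ℝ) : IsClosed {y : Fin n → ℝ | bayesLE x y} := by
  have he : {y : Fin n → ℝ | bayesLE x y} = ⋃ σ : Equiv.Perm (Fin n),
      (({y : Fin n → ℝ | Antitone fun i => x (σ i)} ∩
        {y : Fin n → ℝ | Antitone fun i => y (σ i)}) ∩
        ⋂ (i : Fin n), ⋂ (j : Fin n), ⋂ (_ : (i : ℕ) + 1 = (j : ℕ)),
          {y : Fin n → ℝ | x (σ i) * y (σ j) ≤ x (σ j) * y (σ i)}) := by
    ext y
    simp only [Set.mem_setOf_eq, Set.mem_iUnion, Set.mem_inter_iff, Set.mem_iInter, bayesLE]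
    constructor
    · rintro ⟨σ, h1, h2, h3⟩; exact ⟨σ, ⟨h1, h2⟩, fun i j hij => h3 i j hij⟩
    · rintro ⟨σ, ⟨h1, h2⟩, h3⟩; exact ⟨σ, h1, h2, fun i j hij => h3 i j hij⟩
  rw [he]
  refine isClosed_iUnion_of_finite fun σ => ?_
  refine IsClosed.inter (IsClosed.inter (isClosed_const_set _) (isClosed_antitone_perm σ)) ?_
  exact isClosed_iInter fun i => isClosed_iInter fun j => isClosed_iInter fun _ =>
    isClosed_le (continuous_const.mul (continuous_apply _))
      (continuous_const.mul (continuous_apply _))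

theorem isClosed_bayes_left (z : Fin n → ℝ) : IsClosed {y : Fin n → ℝ | bayesLE y z} := by
  have he : {y : Fin n → ℝ | bayesLE y z} = ⋃ σ : Equiv.Perm (Fin n),
      (({y : Fin n → ℝ | Antitone fun i => y (σ i)} ∩
        {y : Fin n → ℝ | Antitone fun i => z (σ i)}) ∩
        ⋂ (i : Fin n), ⋂ (j : Fin n), ⋂ (_ : (i : ℕ) + 1 = (j : ℕ)),
          {y : Fin n → ℝ | y (σ i) * z (σ j) ≤ y (σ j) * z (σ i)}) := by
    ext y
    simp only [Set.mem_setOf_eq, Set.mem_iUnion, Set.mem_inter_iff, Set.mem_iInter, bayesLE]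
    constructor
    · rintro ⟨σ, h1, h2, h3⟩; exact ⟨σ, ⟨h1, h2⟩, fun i j hij => h3 i j hij⟩
    · rintro ⟨σ, ⟨h1, h2⟩, h3⟩; exact ⟨σ, h1, h2, fun i j hij => h3 i j hij⟩
  rw [he]
  refine isClosed_iUnion_of_finite fun σ => ?_
  refine IsClosed.inter (IsClosed.inter (isClosed_antitone_perm σ) (isClosed_const_set _)) ?_
  exact isClosed_iInter fun i => isClosed_iInter fun j => isClosed_iInter fun _ =>
    isClosed_le ((continuous_apply _).mul continuous_const)
      ((continuous_apply _).mul continuous_const)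

theorem mem_stdSimplex_iff (x : Fin n → ℝ) :
    x ∈ stdSimplex ℝ (Fin n) ↔ IsClassicalState n x := Iff.rfl

theorem clLE_refl (x : ClState n) : clLE x x := bayesLE_of_pairLE x.2.1 (pairLE_refl x.1)

theorem clLE_trans {x y z : ClState n} (h1 : clLE x y) (h2 : clLE y z) : clLE x z :=
  bayesLE_of_pairLE x.2.1 (pairLE_trans x.2 y.2 z.2
    (pairLE_of_bayesLE x.2.1 y.2.1 h1) (pairLE_of_bayesLE y.2.1 z.2.1 h2))

theorem clLE_antisymm {x y : ClState n} (h1 : clLE x y) (h2 : clLE y x) : x = y :=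
  Subtype.ext (pair_antisymm x.2 y.2
    (pairLE_of_bayesLE x.2.1 y.2.1 h1) (pairLE_of_bayesLE y.2.1 x.2.1 h2))

theorem pureState_isClassical (i : Fin n) : IsClassicalState n (pureState i) := by
  constructor
  · intro j; by_cases h : j = i <;> simp [pureState, h]
  · simp [pureState]

theorem pairLE_pure_max {x : Fin n → ℝ} (hx : ∀ j, 0 ≤ x j) {i₀ : Fin n}
    (hm : ∀ j, x j ≤ x i₀) : pairLE x (pureState i₀) := by
  intro a b
  by_cases ha : a = i₀
  · by_cases hb : b = i₀
    · subst ha; subst hb; exact Or.inl ⟨le_refl _, le_refl _, le_refl _⟩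
    · subst ha
      refine Or.inl ⟨hm b, by simp [pureState, hb], ?_⟩
      simp [pureState, hb]
      exact hx b
  · by_cases hb : b = i₀
    · subst hb
      refine Or.inr ⟨hm a, by simp [pureState, ha], ?_⟩
      simp [pureState, ha]
      exact hx a
    · rcases le_total (x b) (x a) with h | h
      · exact Or.inl ⟨h, by simp [pureState, ha, hb], by simp [pureState, ha, hb]⟩
      · exact Or.inr ⟨h, by simp [pureState, ha, hb], by simp [pureState, ha, hb]⟩

/-- (Δⁿ, ⊑) is a dcpo whose maximal elements are exactly the pure states and whose
least element is (1/n, …, 1/n). -/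
theorem classical_states_dcpo (n : ℕ) (hn : 2 ≤ n) :
    (∀ x : ClState n, clLE x x) ∧
    (∀ x y : ClState n, clLE x y → clLE y x → x = y) ∧
    (∀ x y z : ClState n, clLE x y → clLE y z → clLE x z) ∧
    (∀ S : Set (ClState n), S.Nonempty → DirectedOn clLE S →
      ∃ a : ClState n, IsLub' clLE S a) ∧
    ({x : ClState n | ∀ y, clLE x y → y = x} =
      {x : ClState n | ∃ i : Fin n, x.val = pureState i}) ∧
    (∃ b : ClState n, (∀ i, b.val i = (n : ℝ)⁻¹) ∧ ∀ x, clLE b x) := by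
  refine ⟨clLE_refl, fun x y h1 h2 => clLE_antisymm h1 h2,
    fun x y z h1 h2 => clLE_trans h1 h2, ?_, ?_, ?_⟩
  · -- dcpo
    intro S hS hdir
    haveI := hS.to_subtype
    set T : S → Set (Fin n → ℝ) :=
      fun s => {v | ∃ t : ClState n, t ∈ S ∧ clLE s.1 t ∧ v = t.1} with hT
    set F : Filter (Fin n → ℝ) := ⨅ s : S, Filter.principal (T s) with hF
    have hdirF : Directed (· ≥ ·) fun s : S => Filter.principal (T s) := by
      rintro ⟨s, hs⟩ ⟨s', hs'⟩
      obtain ⟨u, hu, hsu, hs'u⟩ := hdir s hs s' hs'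
      refine ⟨⟨u, hu⟩, Filter.principal_mono.mpr ?_, Filter.principal_mono.mpr ?_⟩
      · rintro v ⟨t, htS, hut, rfl⟩
        exact ⟨t, htS, clLE_trans hsu hut, rfl⟩
      · rintro v ⟨t, htS, hut, rfl⟩
        exact ⟨t, htS, clLE_trans hs'u hut, rfl⟩
    haveI hFne : F.NeBot :=
      Filter.iInf_neBot_of_directed' hdirF fun s =>
        Filter.principal_neBot_iff.mpr ⟨s.1.1, s.1, s.2, clLE_refl s.1, rfl⟩
    have hFle : F ≤ Filter.principal (stdSimplex ℝ (Fin n)) := by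
      obtain ⟨s₀, hs₀⟩ := hS
      refine le_trans (iInf_le _ ⟨s₀, hs₀⟩) (Filter.principal_mono.mpr ?_)
      rintro v ⟨t, htS, -, rfl⟩
      exact t.2
    obtain ⟨L, hL, hcl⟩ := (isCompact_stdSimplex ℝ (Fin n)).exists_clusterPt hFle
    have key : ∀ U : Set (Fin n → ℝ), U ∈ F → IsClosed U → L ∈ U := by
      intro U hU hUc
      have h1 : ClusterPt L (Filter.principal U) := hcl.mono (Filter.le_principal_iff.mpr hU)
      have h2 : L ∈ closure U := mem_closure_iff_clusterPt.mpr h1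
      rwa [hUc.closure_eq] at h2
    refine ⟨⟨L, hL⟩, ?_, ?_⟩
    · intro s hs
      have hsub : T ⟨s, hs⟩ ⊆ {y | bayesLE s.1 y} := by
        rintro v ⟨t, -, ht, rfl⟩; exact ht
      have hmem : {y : Fin n → ℝ | bayesLE s.1 y} ∈ F :=
        Filter.mem_of_superset
          (Filter.mem_iInf_of_mem ⟨s, hs⟩ (Filter.mem_principal_self _)) hsub
      exact key _ hmem (isClosed_bayes_right s.1)
    · intro b hb
      obtain ⟨s₀, hs₀⟩ := hS
      have hsub : T ⟨s₀, hs₀⟩ ⊆ {y | bayesLE y b.1} := by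
        rintro v ⟨t, htS, -, rfl⟩; exact hb t htS
      have hmem : {y : Fin n → ℝ | bayesLE y b.1} ∈ F :=
        Filter.mem_of_superset
          (Filter.mem_iInf_of_mem ⟨s₀, hs₀⟩ (Filter.mem_principal_self _)) hsub
      exact key _ hmem (isClosed_bayes_left b.1)
  · -- maximal elements
    ext x
    simp only [Set.mem_setOf_eq]
    constructor
    · intro hmax
      have hne : (Finset.univ : Finset (Fin n)).Nonempty :=
        ⟨⟨0, by omega⟩, Finset.mem_univ _⟩
      obtain ⟨i₀, -, hmaxi⟩ := Finset.exists_max_image Finset.univ x.1 hne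
      have hle : clLE x ⟨pureState i₀, pureState_isClassical i₀⟩ :=
        bayesLE_of_pairLE x.2.1 (pairLE_pure_max x.2.1 fun j => hmaxi j (Finset.mem_univ j))
      refine ⟨i₀, ?_⟩
      rw [← hmax _ hle]
    · rintro ⟨i, hxi⟩ y hxy
      have hp := pairLE_of_bayesLE x.2.1 y.2.1 hxy
      rw [hxi] at hp
      have hyb : ∀ b, b ≠ i → y.1 b = 0 := by
        intro b hb
        rcases hp i b with ⟨-, -, h3⟩ | ⟨h1, -, -⟩
        · simp [pureState, hb] at h3
          exact le_antisymm h3 (y.2.1 b)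
        · simp [pureState, hb] at h1
          linarith
      have hyi : y.1 i = 1 := by
        have hsum := y.2.2
        rw [Finset.sum_eq_single i (fun b _ hb => hyb b hb)
          (fun h => absurd (Finset.mem_univ i) h)] at hsum
        exact hsum
      apply Subtype.ext
      rw [hxi]
      funext j
      by_cases hj : j = i
      · rw [hj, hyi]; simp [pureState]
      · rw [hyb j hj]; simp [pureState, hj]
  · -- least element
    have hn0 : (n : ℝ) ≠ 0 := Nat.cast_ne_zero.mpr (by omega)
    have hbs : IsClassicalState n (fun _ => (n : ℝ)⁻¹) := by
      constructor
      · intro i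
        simp only []
        positivity
      · rw [Finset.sum_const, Finset.card_univ, Fintype.card_fin, nsmul_eq_mul,
          mul_inv_cancel₀ hn0]
    refine ⟨⟨fun _ => (n : ℝ)⁻¹, hbs⟩, fun i => rfl, ?_⟩
    intro x
    refine bayesLE_of_pairLE (fun i => by positivity) ?_
    intro a b
    rcases le_total (x.1 b) (x.1 a) with h | h
    · exact Or.inl ⟨le_refl _, h, mul_le_mul_of_nonneg_left h (by positivity)⟩
    · exact Or.inr ⟨le_refl _, h, mul_le_mul_of_nonneg_left h (by positivity)⟩
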